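/- arXiv:1906.06814 — 5 statements merged into one kernel-verified Lean document; each statement's English description precedes it below -/
import Mathlib

section
/- Let G be a connected bipartite simple graph on n vertices. Then the Wiener index of G satisfies W(G) ≥ (3n² − 4n)/4. -/
open Finset SimpleGraph

noncomputable section

/-- The Wiener index of a graph `G`: the sum of graph distances over all unordered pairs
of distinct vertices, i.e. half the sum over ordered pairs. -/
def wienerIndex {V : Type*} [Fintype V] (G : SimpleGraph V) : ℝ :=
  (∑ u : V, ∑ v : V, (G.dist u v : ℝ)) / 2

open Classical in
/-- The Harary index of a graph `G`: the sum of reciprocals of graph distances over all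
unordered pairs of distinct vertices, where pairs in different components contribute `0`. -/
def hararyIndex {V : Type*} [Fintype V] (G : SimpleGraph V) : ℝ :=
  (∑ u : V, ∑ v : V, if u ≠ v ∧ G.Reachable u v then ((G.dist u v : ℝ))⁻¹ else 0) / 2

/-- The distance matrix of a graph. -/
def distMatrix {V : Type*} [Fintype V] (G : SimpleGraph V) : Matrix V V ℝ :=
  fun u v => (G.dist u v : ℝ)

open Classical in
/-- The Harary (reciprocal distance) matrix of a graph. -/
def hararyMatrix {V : Type*} [Fintype V] (G : SimpleGraph V) : Matrix V V ℝ :=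
  fun u v => if u ≠ v ∧ G.Reachable u v then ((G.dist u v : ℝ))⁻¹ else 0

/-- The distance spectral radius: the largest eigenvalue of the distance matrix. -/
def distSpectralRadius {V : Type*} [Fintype V] [DecidableEq V] (G : SimpleGraph V) : ℝ :=
  sSup (spectrum ℝ (distMatrix G))

/-- The Harary spectral radius: the largest eigenvalue of the Harary matrix. -/
def hararySpectralRadius {V : Type*} [Fintype V] [DecidableEq V] (G : SimpleGraph V) : ℝ :=
  sSup (spectrum ℝ (hararyMatrix G))

/-- A graph on `n` vertices is pancyclic if it contains a cycle of every length `ℓ`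
with `3 ≤ ℓ ≤ n`. -/
def Pancyclic {V : Type*} [Fintype V] (G : SimpleGraph V) : Prop :=
  ∀ ℓ : ℕ, 3 ≤ ℓ → ℓ ≤ Fintype.card V → ∃ (v : V) (c : G.Walk v v), c.IsCycle ∧ c.length = ℓ

/-- A graph is bipartite iff it is 2-colorable. -/
def IsBipartite {V : Type*} (G : SimpleGraph V) : Prop := G.Colorable 2

/-- A graph is a complete bipartite graph if it is isomorphic to some `K_{a,b}`. -/
def IsCompleteBipartite {V : Type*} (G : SimpleGraph V) : Prop :=
  ∃ a b : ℕ, Nonempty (G ≃g completeBipartiteGraph (Fin a) (Fin b))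

/-- The join `G ∨ H` of two graphs: take disjoint copies of `G` and `H` and add all edges
between them. -/
def graphJoin {α β : Type*} (G : SimpleGraph α) (H : SimpleGraph β) : SimpleGraph (α ⊕ β) where
  Adj u v := match u, v with
    | Sum.inl u, Sum.inl v => G.Adj u v
    | Sum.inr u, Sum.inr v => H.Adj u v
    | Sum.inl _, Sum.inr _ => True
    | Sum.inr _, Sum.inl _ => True
  symm := ⟨fun u v => match u, v with
    | Sum.inl u, Sum.inl v => G.adj_symm
    | Sum.inr u, Sum.inr v => H.adj_symm
    | Sum.inl _, Sum.inr _ | Sum.inr _, Sum.inl _ => fun _ => trivial⟩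
  loopless := ⟨fun u => by cases u <;> simp⟩

/-- The family 𝒩𝒫 of exceptional graphs (on `n = Fintype.card V` vertices for the first one). -/
def InNPFamily {V : Type*} [Fintype V] (G : SimpleGraph V) : Prop :=
  Nonempty (G ≃g graphJoin (⊤ : SimpleGraph (Fin 2))
      ((⊤ : SimpleGraph (Fin (Fintype.card V - 4))) ⊕g (⊥ : SimpleGraph (Fin 2)))) ∨
  Nonempty (G ≃g graphJoin (⊤ : SimpleGraph (Fin 5)) (⊥ : SimpleGraph (Fin 6))) ∨
  Nonempty (G ≃g graphJoin (⊤ : SimpleGraph (Fin 3))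
      ((⊤ : SimpleGraph (Fin 2)) ⊕g (⊥ : SimpleGraph (Fin 3)))) ∨
  Nonempty (G ≃g graphJoin (⊤ : SimpleGraph (Fin 3))
      (completeBipartiteGraph (Fin 1) (Fin 4) ⊕g (⊥ : SimpleGraph (Fin 1)))) ∨
  Nonempty (G ≃g graphJoin (⊤ : SimpleGraph (Fin 3))
      (completeBipartiteGraph (Fin 1) (Fin 3) ⊕g (⊤ : SimpleGraph (Fin 2)))) ∨
  Nonempty (G ≃g graphJoin (graphJoin (⊤ : SimpleGraph (Fin 2)) (⊥ : SimpleGraph (Fin 2)))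
      (⊥ : SimpleGraph (Fin 5))) ∨
  Nonempty (G ≃g graphJoin (⊤ : SimpleGraph (Fin 4)) (⊥ : SimpleGraph (Fin 5))) ∨
  Nonempty (G ≃g graphJoin (completeBipartiteGraph (Fin 1) (Fin 2)) (⊥ : SimpleGraph (Fin 4))) ∨
  Nonempty (G ≃g graphJoin (⊤ : SimpleGraph (Fin 2))
      (completeBipartiteGraph (Fin 1) (Fin 3) ⊕g (⊥ : SimpleGraph (Fin 1)))) ∨
  Nonempty (G ≃g graphJoin (⊤ : SimpleGraph (Fin 3)) (⊥ : SimpleGraph (Fin 4)))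

/-- For a connected bipartite simple graph `G` on `n` vertices,
`W(G) ≥ (3n² − 4n)/4`. -/
theorem wiener_ge_of_bipartite {V : Type*} [Fintype V] (G : SimpleGraph V) (n : ℕ)
    (hn : Fintype.card V = n) (hconn : G.Connected) (hbip : _root_.IsBipartite G) :
    wienerIndex G ≥ (3 * (n : ℝ) ^ 2 - 4 * n) / 4 := by
  classical
  obtain ⟨C⟩ := hbip
  -- pointwise bound
  have hd : ∀ u v : V, (1 : ℝ) + (if C u = C v then 1 else 0) - (if u = v then 2 else 0)
      ≤ (G.dist u v : ℝ) := by
    intro u v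
    by_cases huv : u = v
    · subst huv; norm_num [SimpleGraph.dist_self]
    · rw [if_neg huv]
      have hpos : 0 < G.dist u v := hconn.pos_dist_of_ne huv
      by_cases hc : C u = C v
      · have hadj : ¬ G.Adj u v := fun h => C.valid h hc
        have h1 : G.dist u v ≠ 1 := fun h => hadj (SimpleGraph.dist_eq_one_iff_adj.mp h)
        have h2 : 2 ≤ G.dist u v := by omega
        rw [if_pos hc]
        have := (Nat.cast_le (α := ℝ)).mpr h2
        push_cast at this ⊢; linarith
      · rw [if_neg hc]
        have := (Nat.cast_le (α := ℝ)).mpr hpos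
        push_cast at this ⊢; linarith
  have hsum : ∑ u : V, ∑ v : V,
      ((1 : ℝ) + (if C u = C v then 1 else 0) - (if u = v then 2 else 0))
      ≤ ∑ u : V, ∑ v : V, (G.dist u v : ℝ) :=
    Finset.sum_le_sum fun u _ => Finset.sum_le_sum fun v _ => hd u v
  -- decompose the indicator
  have hind : ∀ u v : V, (if C u = C v then (1:ℝ) else 0)
      = ∑ i : Fin 2, (if C u = i then (1:ℝ) else 0) * (if C v = i then 1 else 0) := by
    intro u v
    by_cases h : C u = C v
    · rw [if_pos h, h]
      simp [ite_and, mul_ite]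
    · rw [if_neg h]
      rw [eq_comm]
      apply Finset.sum_eq_zero
      intro i _
      by_cases h1 : C u = i
      · have h2 : C v ≠ i := fun h2 => h (h1.trans h2.symm)
        simp [h1, h2]
      · simp [h1]
  set f : Fin 2 → ℝ := fun i => ∑ u : V, (if C u = i then (1:ℝ) else 0) with hf
  have hmid : ∑ u : V, ∑ v : V, (if C u = C v then (1:ℝ) else 0) = ∑ i : Fin 2, f i ^ 2 := by
    simp_rw [hind]
    have h1 : ∀ u : V, (∑ v : V, ∑ i : Fin 2,
        (if C u = i then (1:ℝ) else 0) * (if C v = i then 1 else 0))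
        = ∑ i : Fin 2, ∑ v : V, (if C u = i then (1:ℝ) else 0) * (if C v = i then 1 else 0) :=
      fun u => Finset.sum_comm
    simp_rw [h1]
    rw [Finset.sum_comm]
    refine Finset.sum_congr rfl fun i _ => ?_
    rw [sq, hf, ← Finset.sum_mul_sum]
  -- card of fibers sums to n
  have hcard : ∑ i : Fin 2, f i = n := by
    rw [hf, Finset.sum_comm]
    simp [Finset.sum_ite_eq, hn]
  -- lower bound on the double sum
  have hub : (3 * (n:ℝ)^2 - 4*n)/2 ≤ ∑ u : V, ∑ v : V, (G.dist u v : ℝ) := by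
    refine le_trans ?_ hsum
    have : ∑ u : V, ∑ v : V,
        ((1 : ℝ) + (if C u = C v then 1 else 0) - (if u = v then 2 else 0))
        = (n:ℝ)^2 + ∑ i : Fin 2, f i ^ 2 - 2*n := by
      simp_rw [Finset.sum_sub_distrib, Finset.sum_add_distrib]
      rw [hmid]
      simp [Finset.sum_ite_eq, hn]
      ring
    rw [this]
    have h2 : ((n:ℝ))^2 / 2 ≤ ∑ i : Fin 2, f i ^ 2 := by
      have := hcard
      rw [Fin.sum_univ_two] at this ⊢
      nlinarith [sq_nonneg (f 0 - f 1)]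
    linarith
  rw [wienerIndex, ge_iff_le, div_le_div_iff₀ (by norm_num) (by norm_num)]
  linarith
end
end

section
/- Let G be a connected bipartite simple graph on n vertices. Then the Harary index of G satisfies H(G) ≤ (3n² − 2n)/8. -/
open Finset SimpleGraph

noncomputable section

set_option maxHeartbeats 800000 in
/-- For a connected bipartite simple graph `G` on `n` vertices,
`H(G) ≤ (3n² − 2n)/8`. -/
theorem harary_le_of_bipartite {V : Type*} [Fintype V] (G : SimpleGraph V) (n : ℕ)
    (hn : Fintype.card V = n) (hconn : G.Connected) (hbip : _root_.IsBipartite G) :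
    hararyIndex G ≤ (3 * (n : ℝ) ^ 2 - 2 * n) / 8 := by
  classical
  obtain ⟨c⟩ := hbip
  have key : ∀ u v : V, (if u ≠ v ∧ G.Reachable u v then ((G.dist u v : ℝ))⁻¹ else 0)
      ≤ (if u ≠ v then (1:ℝ)/2 else 0) + (if c u ≠ c v then (1:ℝ)/2 else 0) := by
    intro u v
    by_cases huv : u ≠ v ∧ G.Reachable u v
    · rw [if_pos huv, if_pos huv.1]
      by_cases hadj : G.Adj u v
      · have hc : c u ≠ c v := c.valid hadj
        rw [if_pos hc, SimpleGraph.dist_eq_one_iff_adj.mpr hadj]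
        norm_num
      · have h0 : G.dist u v ≠ 0 := SimpleGraph.dist_ne_zero_iff_ne_and_reachable.mpr huv
        have h1 : G.dist u v ≠ 1 := fun h => hadj (SimpleGraph.dist_eq_one_iff_adj.mp h)
        have hd : (2:ℝ) ≤ (G.dist u v : ℝ) := by exact_mod_cast by omega
        have : ((G.dist u v : ℝ))⁻¹ ≤ 1/2 := by
          rw [inv_le_comm₀ (by linarith) (by norm_num)]
          linarith
        have hnn : (0:ℝ) ≤ if c u ≠ c v then (1:ℝ)/2 else 0 := by positivity
        linarith
    · rw [if_neg huv]
      positivity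
  set a := (univ.filter (fun v => c v = 0)).card with ha
  set b := (univ.filter (fun v => ¬ c v = 0)).card with hb
  have hab : a + b = n := by
    rw [ha, hb, Finset.card_filter_add_card_filter_not, Finset.card_univ, hn]
  have hsum2 : ∀ u : V, ∑ v : V, (if c u ≠ c v then (1:ℝ)/2 else 0)
      = (if c u = 0 then (b:ℝ) else (a:ℝ)) / 2 := by
    intro u
    rw [Finset.sum_ite, Finset.sum_const, Finset.sum_const]
    simp only [smul_eq_mul, mul_zero, add_zero, nsmul_eq_mul]
    by_cases hu : c u = 0
    · rw [if_pos hu]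
      have : (Finset.univ.filter (fun v => c u ≠ c v)) = univ.filter (fun v => ¬ c v = 0) := by
        apply Finset.filter_congr
        intro v _
        rw [hu]
        constructor
        · intro h h'; exact h h'.symm
        · intro h h'; exact h h'.symm
      rw [this]; ring
    · rw [if_neg hu]
      have hcu : c u = 1 := by omega
      have : (Finset.univ.filter (fun v => c u ≠ c v)) = univ.filter (fun v => c v = 0) := by
        apply Finset.filter_congr
        intro v _
        rw [hcu]
        constructor
        · intro h
          omega
        · intro h h'
          rw [← h'] at h
          omega
      rw [this]; ring
  have hS2 : ∑ u : V, ∑ v : V, (if c u ≠ c v then (1:ℝ)/2 else 0) = (a:ℝ) * b := by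
    calc ∑ u : V, ∑ v : V, (if c u ≠ c v then (1:ℝ)/2 else 0)
        = ∑ u : V, (if c u = 0 then (b:ℝ) else (a:ℝ)) / 2 := by
          exact Finset.sum_congr rfl fun u _ => hsum2 u
      _ = (a:ℝ) * b := by
          rw [← Finset.sum_div, Finset.sum_ite, Finset.sum_const, Finset.sum_const]
          have : (univ.filter (fun v => ¬ c v = 0)).card = b := rfl
          simp only [nsmul_eq_mul, ← ha, this]
          ring
  have hS1 : ∑ u : V, ∑ v : V, (if u ≠ v then (1:ℝ)/2 else 0) = (n:ℝ) * (n - 1) / 2 := by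
    have : ∀ u : V, ∑ v : V, (if u ≠ v then (1:ℝ)/2 else 0) = ((n:ℝ) - 1) / 2 := by
      intro u
      rw [Finset.sum_ite, Finset.sum_const, Finset.sum_const]
      have : (univ.filter (fun v => u ≠ v)).card = n - 1 := by
        rw [Finset.filter_ne, Finset.card_erase_of_mem (mem_univ u), Finset.card_univ, hn]
      rw [this]
      have hn1 : 1 ≤ n := by
        rw [← hn]; exact Fintype.card_pos_iff.mpr hconn.nonempty
      simp only [nsmul_eq_mul, smul_eq_mul, mul_zero, add_zero]
      push_cast [Nat.cast_sub hn1]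
      ring
    rw [Finset.sum_congr rfl fun u _ => this u, Finset.sum_const, Finset.card_univ, hn]
    simp only [nsmul_eq_mul]
    ring
  have hmain : ∑ u : V, ∑ v : V, (if u ≠ v ∧ G.Reachable u v then ((G.dist u v : ℝ))⁻¹ else 0)
      ≤ (n:ℝ) * (n - 1) / 2 + (a:ℝ) * b := by
    rw [← hS1, ← hS2, ← Finset.sum_add_distrib]
    apply Finset.sum_le_sum
    intro u _
    rw [← Finset.sum_add_distrib]
    exact Finset.sum_le_sum fun v _ => key u v
  have habn : (a:ℝ) + b = n := by exact_mod_cast hab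
  have hab2 : (a:ℝ) * b ≤ (n:ℝ)^2 / 4 := by nlinarith [sq_nonneg ((a:ℝ) - b)]
  rw [hararyIndex]
  linarith
end
end

section
/- For every n ≥ 5, the distance spectral radius of the graph K₂∨(K_{n−4}+2K₁) satisfies ρ(K₂∨(K_{n−4}+2K₁)) > n + 3 − 14/n. -/
open Finset SimpleGraph

noncomputable section

namespace DistNP1Aux

open Matrix

lemma dot_le_sSup_spectrum {V : Type*} [Fintype V] [DecidableEq V] [Nonempty V]
    {A : Matrix V V ℝ} (hA : A.IsHermitian) (x : V → ℝ) :
    x ⬝ᵥ A *ᵥ x ≤ sSup (spectrum ℝ A) * (x ⬝ᵥ x) := by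
  set U : Matrix V V ℝ := (hA.eigenvectorUnitary : Matrix V V ℝ) with hU
  have hspec : A = U * Matrix.diagonal (RCLike.ofReal ∘ hA.eigenvalues) * star U :=
    hA.spectral_theorem
  set y : V → ℝ := (star U) *ᵥ x with hy
  have hUU : U * star U = 1 := Unitary.mul_star_self_of_mem hA.eigenvectorUnitary.2
  have hvm : vecMul x U = y := by
    ext i
    simp [hy, Matrix.vecMul, Matrix.mulVec, dotProduct, Matrix.star_apply, mul_comm]
  have hxA : x ⬝ᵥ A *ᵥ x = ∑ i, hA.eigenvalues i * (y i)^2 := by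
    have h2 : x ⬝ᵥ (U * Matrix.diagonal (RCLike.ofReal ∘ hA.eigenvalues) * star U) *ᵥ x
        = ∑ i, hA.eigenvalues i * (y i)^2 := by
      rw [Matrix.mul_assoc, ← Matrix.mulVec_mulVec, ← Matrix.mulVec_mulVec, ← hy,
        Matrix.dotProduct_mulVec, hvm]
      simp only [Matrix.mulVec_diagonal, dotProduct]
      refine Finset.sum_congr rfl fun i _ => ?_
      simp [sq]; ring
    rw [← h2, ← hspec]
  have hxx : x ⬝ᵥ x = ∑ i, (y i)^2 := by
    have h1 : x ⬝ᵥ x = x ⬝ᵥ (U * star U) *ᵥ x := by rw [hUU]; simp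
    rw [h1, ← Matrix.mulVec_mulVec, Matrix.dotProduct_mulVec, hvm, ← hy]
    simp [dotProduct, sq]
  have hbdd : BddAbove (spectrum ℝ A) := (Matrix.finite_real_spectrum).bddAbove
  have hle : ∀ i, hA.eigenvalues i ≤ sSup (spectrum ℝ A) := fun i =>
    le_csSup hbdd (hA.eigenvalues_mem_spectrum_real i)
  rw [hxA, hxx, Finset.mul_sum]
  exact Finset.sum_le_sum fun i _ => mul_le_mul_of_nonneg_right (hle i) (sq_nonneg _)

section Dist
variable (n : ℕ)

abbrev Gnp (n : ℕ) : SimpleGraph (Fin 2 ⊕ (Fin (n-4) ⊕ Fin 2)) :=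
  graphJoin (⊤ : SimpleGraph (Fin 2))
    ((⊤ : SimpleGraph (Fin (n - 4))) ⊕g (⊥ : SimpleGraph (Fin 2)))

lemma adj11 (i j : Fin 2) : (Gnp n).Adj (Sum.inl i) (Sum.inl j) ↔ i ≠ j := by
  show (⊤ : SimpleGraph (Fin 2)).Adj i j ↔ i ≠ j
  simp

lemma adj12 (i : Fin 2) (v : Fin (n-4) ⊕ Fin 2) : (Gnp n).Adj (Sum.inl i) (Sum.inr v) := trivial

lemma adj21 (i : Fin 2) (v : Fin (n-4) ⊕ Fin 2) : (Gnp n).Adj (Sum.inr v) (Sum.inl i) := trivial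

lemma adjkk (i j : Fin (n-4)) :
    (Gnp n).Adj (Sum.inr (Sum.inl i)) (Sum.inr (Sum.inl j)) ↔ i ≠ j := by
  show ((⊤ : SimpleGraph (Fin (n - 4))) ⊕g (⊥ : SimpleGraph (Fin 2))).Adj (Sum.inl i) (Sum.inl j) ↔ _
  simp

lemma adjki (i : Fin (n-4)) (j : Fin 2) :
    ¬ (Gnp n).Adj (Sum.inr (Sum.inl i)) (Sum.inr (Sum.inr j)) := by
  show ¬ ((⊤ : SimpleGraph (Fin (n - 4))) ⊕g (⊥ : SimpleGraph (Fin 2))).Adj (Sum.inl i) (Sum.inr j)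
  simp

lemma adjik (i : Fin (n-4)) (j : Fin 2) :
    ¬ (Gnp n).Adj (Sum.inr (Sum.inr j)) (Sum.inr (Sum.inl i)) := by
  show ¬ ((⊤ : SimpleGraph (Fin (n - 4))) ⊕g (⊥ : SimpleGraph (Fin 2))).Adj (Sum.inr j) (Sum.inl i)
  simp

lemma adjii (i j : Fin 2) :
    ¬ (Gnp n).Adj (Sum.inr (Sum.inr i)) (Sum.inr (Sum.inr j)) := by
  show ¬ ((⊤ : SimpleGraph (Fin (n - 4))) ⊕g (⊥ : SimpleGraph (Fin 2))).Adj (Sum.inr i) (Sum.inr j)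
  simp

lemma dist_adj {V : Type*} {G : SimpleGraph V} {u v : V} (h : G.Adj u v) : G.dist u v = 1 :=
  SimpleGraph.dist_eq_one_iff_adj.mpr h

lemma dist_two {u v : Fin 2 ⊕ (Fin (n-4) ⊕ Fin 2)} (hne : u ≠ v) (hna : ¬ (Gnp n).Adj u v)
    (h1 : (Gnp n).Adj u (Sum.inl 0)) (h2 : (Gnp n).Adj (Sum.inl 0) v) :
    (Gnp n).dist u v = 2 := by
  have hle : (Gnp n).dist u v ≤ 2 := by
    have := SimpleGraph.dist_le
      (SimpleGraph.Walk.cons h1 (SimpleGraph.Walk.cons h2 SimpleGraph.Walk.nil))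
    simpa using this
  have hpos : 0 < (Gnp n).dist u v :=
    SimpleGraph.Reachable.pos_dist_of_ne
      ⟨SimpleGraph.Walk.cons h1 (SimpleGraph.Walk.cons h2 SimpleGraph.Walk.nil)⟩ hne
  have hne1 : (Gnp n).dist u v ≠ 1 := fun h => hna (SimpleGraph.dist_eq_one_iff_adj.mp h)
  omega

lemma dM11 (i j : Fin 2) :
    distMatrix (Gnp n) (Sum.inl i) (Sum.inl j) = if i = j then 0 else 1 := by
  unfold distMatrix
  split
  · subst ‹i = j›; simp
  · rw [dist_adj ((adj11 n i j).mpr ‹i ≠ j›)]; norm_num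

lemma dM12 (i : Fin 2) (v : Fin (n-4) ⊕ Fin 2) :
    distMatrix (Gnp n) (Sum.inl i) (Sum.inr v) = 1 := by
  unfold distMatrix; rw [dist_adj (adj12 n i v)]; norm_num

lemma dM21 (i : Fin 2) (v : Fin (n-4) ⊕ Fin 2) :
    distMatrix (Gnp n) (Sum.inr v) (Sum.inl i) = 1 := by
  unfold distMatrix; rw [dist_adj (adj21 n i v)]; norm_num

lemma dMkk (i j : Fin (n-4)) :
    distMatrix (Gnp n) (Sum.inr (Sum.inl i)) (Sum.inr (Sum.inl j)) = if i = j then 0 else 1 := by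
  unfold distMatrix
  split
  · subst ‹i = j›; simp
  · rw [dist_adj ((adjkk n i j).mpr ‹i ≠ j›)]; norm_num

lemma dMki (i : Fin (n-4)) (j : Fin 2) :
    distMatrix (Gnp n) (Sum.inr (Sum.inl i)) (Sum.inr (Sum.inr j)) = 2 := by
  unfold distMatrix
  rw [dist_two n (by simp) (adjki n i j) (adj21 n 0 _) (adj12 n 0 _)]; norm_num

lemma dMik (i : Fin (n-4)) (j : Fin 2) :
    distMatrix (Gnp n) (Sum.inr (Sum.inr j)) (Sum.inr (Sum.inl i)) = 2 := by
  unfold distMatrix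
  rw [dist_two n (by simp) (adjik n i j) (adj21 n 0 _) (adj12 n 0 _)]; norm_num

lemma dMii (i j : Fin 2) :
    distMatrix (Gnp n) (Sum.inr (Sum.inr i)) (Sum.inr (Sum.inr j)) = if i = j then 0 else 2 := by
  unfold distMatrix
  split
  · subst ‹i = j›; simp
  · rw [dist_two n (by simp [‹i ≠ j›]) (adjii n i j) (adj21 n 0 _) (adj12 n 0 _)]; norm_num

end Dist

lemma sum_ite_ne {k : ℕ} (i : Fin k) (c : ℝ) :
    ∑ j : Fin k, (if i = j then 0 else c) = ((k:ℝ) - 1) * c := by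
  have h : ∀ j : Fin k, (if i = j then (0:ℝ) else c) = c - (if i = j then c else 0) := by
    intro j; split <;> ring
  simp only [h, Finset.sum_sub_distrib, Finset.sum_const, Finset.card_univ, Fintype.card_fin,
    Finset.sum_ite_eq, Finset.mem_univ, if_true]
  ring

section Quad
variable (n : ℕ)

abbrev xv (n : ℕ) : (Fin 2 ⊕ (Fin (n-4) ⊕ Fin 2)) → ℝ :=
  Sum.elim (fun _ => 1) (Sum.elim (fun _ => 1) (fun _ => 5/4))

lemma xv_dot : dotProduct (xv n) (xv n) = ((n-4 : ℕ) : ℝ) + 41/8 := by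
  simp only [dotProduct, Fintype.sum_sum_type, Sum.elim_inl, Sum.elim_inr,
    Finset.sum_const, Finset.card_univ, Fintype.card_fin]
  ring

lemma xv_quad :
    dotProduct (xv n) (Matrix.mulVec (distMatrix (Gnp n)) (xv n)) =
      ((n-4:ℕ):ℝ)^2 + 13*((n-4:ℕ):ℝ) + 73/4 := by
  simp only [dotProduct, Matrix.mulVec, Fintype.sum_sum_type, Sum.elim_inl, Sum.elim_inr,
    dM11, dM12, dM21, dMkk, dMki, dMik, dMii, mul_one, one_mul, mul_ite, mul_zero,
    Finset.sum_const, Finset.card_univ, Fintype.card_fin]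
  simp only [ite_mul, zero_mul, sum_ite_ne, smul_eq_mul, nsmul_eq_mul, Finset.sum_const,
    Finset.card_univ, Fintype.card_fin, Nat.cast_ofNat]
  ring

lemma distMatrix_isHermitian : (distMatrix (Gnp n)).IsHermitian := by
  unfold Matrix.IsHermitian
  ext u v
  simp [distMatrix, Matrix.conjTranspose_apply, SimpleGraph.dist_comm]

end Quad

end DistNP1Aux

/-- For `n ≥ 5`, `ρ(K₂∨(K_{n−4}+2K₁)) > n + 3 − 14/n`. -/
theorem distSpectralRadius_NP1 (n : ℕ) (h5 : 5 ≤ n) :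
    distSpectralRadius (graphJoin (⊤ : SimpleGraph (Fin 2))
        ((⊤ : SimpleGraph (Fin (n - 4))) ⊕g (⊥ : SimpleGraph (Fin 2)))) >
      (n : ℝ) + 3 - 14 / n := by
  have key := DistNP1Aux.dot_le_sSup_spectrum (DistNP1Aux.distMatrix_isHermitian n)
    (DistNP1Aux.xv n)
  rw [DistNP1Aux.xv_quad, DistNP1Aux.xv_dot] at key
  have hm : ((n-4:ℕ):ℝ) = (n:ℝ) - 4 := by
    have h4 : (4:ℕ) ≤ n := by omega
    push_cast [h4]
    ring
  rw [hm] at key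
  have hn5 : (5:ℝ) ≤ n := by exact_mod_cast h5
  have hn0 : (0:ℝ) < n := by linarith
  have hN : (0:ℝ) ≤ (n:ℝ) - 4 + 41/8 := by linarith
  have h14 : 14/(n:ℝ) * (n:ℝ) = 14 := div_mul_cancel₀ _ (ne_of_gt hn0)
  have hQ : ((n:ℝ)+3-14/n) * ((n:ℝ)-4+41/8) < ((n:ℝ)-4)^2 + 13*((n:ℝ)-4) + 73/4 := by
    nlinarith [h14, sq_nonneg (14*(n:ℝ)-57), hn0, hn5]
  exact lt_of_mul_lt_mul_right (hQ.trans_le key) hN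
end
end

section
/- For every n ≥ 5, the Harary spectral radius of the complement of K₂∨(K_{n−4}+2K₁) equals (n − 3 + √(n² + 18n − 79))/4, and this value is strictly greater than (5n² − 23n + 28)/(n(n − 1)). -/
open Finset SimpleGraph

noncomputable section

namespace HararyAux1

variable {m : ℕ}

abbrev V2 (m : ℕ) := Fin 2 ⊕ (Fin m ⊕ Fin 2)

def Gc (m : ℕ) : SimpleGraph (V2 m) :=
  (graphJoin (⊤ : SimpleGraph (Fin 2)) ((⊤ : SimpleGraph (Fin m)) ⊕g (⊥ : SimpleGraph (Fin 2))))ᶜ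

lemma not_adj_inl (a : Fin 2) (v : V2 m) : ¬ (Gc m).Adj (Sum.inl a) v := by
  rw [Gc, compl_adj]
  rintro ⟨hne, hnadj⟩
  apply hnadj
  cases v with
  | inl b =>
    have : a ≠ b := fun h => hne (by rw [h])
    exact this
  | inr x => trivial

lemma not_adj_bb (b b' : Fin m) : ¬ (Gc m).Adj (Sum.inr (Sum.inl b)) (Sum.inr (Sum.inl b')) := by
  rw [Gc, compl_adj]
  rintro ⟨hne, hnadj⟩
  apply hnadj
  have : b ≠ b' := fun h => hne (by rw [h])
  exact this

lemma adj_bc (b : Fin m) (c : Fin 2) :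
    (Gc m).Adj (Sum.inr (Sum.inl b)) (Sum.inr (Sum.inr c)) := by
  rw [Gc, compl_adj]
  exact ⟨by simp, fun h => by simp [graphJoin] at h⟩

lemma adj_cc {c c' : Fin 2} (h : c ≠ c') :
    (Gc m).Adj (Sum.inr (Sum.inr c)) (Sum.inr (Sum.inr c')) := by
  rw [Gc, compl_adj]
  exact ⟨by simp [h], fun hh => by simp [graphJoin] at hh⟩

lemma not_reach_inl (a : Fin 2) (v : V2 m) (hv : v ≠ Sum.inl a) :
    ¬ (Gc m).Reachable (Sum.inl a) v := by
  rintro ⟨w⟩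
  cases w with
  | nil => exact hv rfl
  | cons h p => exact not_adj_inl a _ h

lemma dist_bc (b : Fin m) (c : Fin 2) :
    (Gc m).dist (Sum.inr (Sum.inl b)) (Sum.inr (Sum.inr c)) = 1 :=
  (SimpleGraph.dist_eq_one_iff_adj).mpr (adj_bc b c)

lemma dist_cb (b : Fin m) (c : Fin 2) :
    (Gc m).dist (Sum.inr (Sum.inr c)) (Sum.inr (Sum.inl b)) = 1 :=
  (SimpleGraph.dist_eq_one_iff_adj).mpr (adj_bc b c).symm

lemma dist_cc {c c' : Fin 2} (h : c ≠ c') :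
    (Gc m).dist (Sum.inr (Sum.inr c)) (Sum.inr (Sum.inr c')) = 1 :=
  (SimpleGraph.dist_eq_one_iff_adj).mpr (adj_cc h)

lemma reach_bb (b b' : Fin m) :
    (Gc m).Reachable (Sum.inr (Sum.inl b)) (Sum.inr (Sum.inl b')) :=
  ((adj_bc b 0).toWalk.append (adj_bc b' 0).symm.toWalk).reachable

lemma dist_bb {b b' : Fin m} (h : b ≠ b') :
    (Gc m).dist (Sum.inr (Sum.inl b)) (Sum.inr (Sum.inl b')) = 2 := by
  have h2 : (Gc m).dist (Sum.inr (Sum.inl b)) (Sum.inr (Sum.inl b')) ≤ 2 := by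
    have := SimpleGraph.dist_le ((adj_bc b 0).toWalk.append (adj_bc b' 0).symm.toWalk)
    simpa using this
  have h0 : (Gc m).dist (Sum.inr (Sum.inl b)) (Sum.inr (Sum.inl b')) ≠ 0 := by
    intro hh
    rcases SimpleGraph.dist_eq_zero_iff_eq_or_not_reachable.mp hh with heq | hnr
    · simp only [Sum.inr.injEq, Sum.inl.injEq] at heq
      exact h heq
    · exact hnr (reach_bb b b')
  have h1 : (Gc m).dist (Sum.inr (Sum.inl b)) (Sum.inr (Sum.inl b')) ≠ 1 := by
    intro hh
    exact not_adj_bb b b' ((SimpleGraph.dist_eq_one_iff_adj).mp hh)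
  omega


def M (m : ℕ) : Matrix (V2 m) (V2 m) ℝ
  | Sum.inl _, _ => 0
  | Sum.inr _, Sum.inl _ => 0
  | Sum.inr (Sum.inl b), Sum.inr (Sum.inl b') => if b = b' then 0 else 1/2
  | Sum.inr (Sum.inl _), Sum.inr (Sum.inr _) => 1
  | Sum.inr (Sum.inr _), Sum.inr (Sum.inl _) => 1
  | Sum.inr (Sum.inr c), Sum.inr (Sum.inr c') => if c = c' then 0 else 1

lemma harary_eq : hararyMatrix (Gc m) = M m := by
  funext u v
  rw [hararyMatrix]
  cases u with
  | inl a =>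
    rw [if_neg, M]
    rintro ⟨hne, hr⟩
    exact not_reach_inl a v (fun h => hne h.symm) hr
  | inr x =>
    cases v with
    | inl a =>
      rw [if_neg, M.eq_def]
      rintro ⟨hne, hr⟩
      exact not_reach_inl a _ (fun h => hne h) hr.symm
    | inr y =>
      cases x with
      | inl b =>
        cases y with
        | inl b' =>
          by_cases hbb : b = b'
          · subst hbb
            rw [if_neg (by simp), M, if_pos rfl]
          · rw [if_pos ⟨by simp [hbb], reach_bb b b'⟩, dist_bb hbb, M, if_neg hbb]
            norm_num
        | inr c =>
          rw [if_pos ⟨by simp, (adj_bc b c).reachable⟩, dist_bc, M]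
          norm_num
      | inr c =>
        cases y with
        | inl b =>
          rw [if_pos ⟨by simp, (adj_bc b c).symm.reachable⟩, dist_cb, M]
          norm_num
        | inr c' =>
          by_cases hcc : c = c'
          · subst hcc
            rw [if_neg (by simp), M, if_pos rfl]
          · rw [if_pos ⟨by simp [hcc], (adj_cc hcc).reachable⟩, dist_cc hcc, M, if_neg hcc]
            norm_num


lemma sum_ite_ne {k : ℕ} (b : Fin k) (f : Fin k → ℝ) (c : ℝ) :
    ∑ b' : Fin k, (if b = b' then (0:ℝ) else c) * f b' = c * (∑ b', f b') - c * f b := by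
  have h1 : ∀ b' ∈ Finset.univ, (if b = b' then (0:ℝ) else c) * f b'
      = c * f b' - (if b = b' then c * f b' else 0) := by
    intro b' _
    split <;> ring
  rw [Finset.sum_congr rfl h1, Finset.sum_sub_distrib, Finset.sum_ite_eq]
  simp [Finset.mul_sum]

@[simp] lemma M_A (a : Fin 2) (v : V2 m) : M m (Sum.inl a) v = 0 := rfl
@[simp] lemma M_XA (x : Fin m ⊕ Fin 2) (a : Fin 2) : M m (Sum.inr x) (Sum.inl a) = 0 := by
  cases x <;> rfl
@[simp] lemma M_BB (b b' : Fin m) :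
    M m (Sum.inr (Sum.inl b)) (Sum.inr (Sum.inl b')) = if b = b' then 0 else 1/2 := rfl
@[simp] lemma M_BC (b : Fin m) (c : Fin 2) :
    M m (Sum.inr (Sum.inl b)) (Sum.inr (Sum.inr c)) = 1 := rfl
@[simp] lemma M_CB (b : Fin m) (c : Fin 2) :
    M m (Sum.inr (Sum.inr c)) (Sum.inr (Sum.inl b)) = 1 := rfl
@[simp] lemma M_CC (c c' : Fin 2) :
    M m (Sum.inr (Sum.inr c)) (Sum.inr (Sum.inr c')) = if c = c' then 0 else 1 := rfl

lemma rowA (x : V2 m → ℝ) (a : Fin 2) : (M m).mulVec x (Sum.inl a) = 0 := by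
  simp [Matrix.mulVec, dotProduct]

lemma rowB (x : V2 m → ℝ) (b : Fin m) : (M m).mulVec x (Sum.inr (Sum.inl b)) =
    (1/2) * (∑ b', x (Sum.inr (Sum.inl b'))) - (1/2) * x (Sum.inr (Sum.inl b))
      + (∑ c : Fin 2, x (Sum.inr (Sum.inr c))) := by
  simp only [Matrix.mulVec, dotProduct, Fintype.sum_sum_type, M_XA, M_BB, M_BC,
    zero_mul, Finset.sum_const_zero, one_mul, zero_add]
  rw [sum_ite_ne b]

lemma rowC (x : V2 m → ℝ) (c : Fin 2) : (M m).mulVec x (Sum.inr (Sum.inr c)) =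
    (∑ b', x (Sum.inr (Sum.inl b')))
      + ((∑ c' : Fin 2, x (Sum.inr (Sum.inr c'))) - x (Sum.inr (Sum.inr c))) := by
  simp only [Matrix.mulVec, dotProduct, Fintype.sum_sum_type, M_XA, M_CB, M_CC,
    zero_mul, Finset.sum_const_zero, one_mul, zero_add]
  rw [sum_ite_ne c]
  ring

lemma qform (x : V2 m → ℝ) :
    ∑ u, x u * (M m).mulVec x u =
      ((∑ b, x (Sum.inr (Sum.inl b)))^2 - ∑ b, x (Sum.inr (Sum.inl b))^2)/2
      + 2 * (∑ b, x (Sum.inr (Sum.inl b))) * (∑ c : Fin 2, x (Sum.inr (Sum.inr c)))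
      + ((∑ c : Fin 2, x (Sum.inr (Sum.inr c)))^2 - ∑ c : Fin 2, x (Sum.inr (Sum.inr c))^2) := by
  set S := ∑ b, x (Sum.inr (Sum.inl b)) with hS
  set T := ∑ c : Fin 2, x (Sum.inr (Sum.inr c)) with hT
  rw [Fintype.sum_sum_type, Fintype.sum_sum_type]
  simp only [rowA, rowB, rowC, mul_zero, Finset.sum_const_zero]
  have h1 : ∀ b ∈ Finset.univ, x (Sum.inr (Sum.inl b)) * ((1/2) * S - (1/2) * x (Sum.inr (Sum.inl b)) + T)
      = ((1/2) * S + T) * x (Sum.inr (Sum.inl b)) - (1/2) * x (Sum.inr (Sum.inl b))^2 := by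
    intro b _
    ring
  have h2 : ∀ c ∈ Finset.univ, x (Sum.inr (Sum.inr c)) * (S + (T - x (Sum.inr (Sum.inr c))))
      = (S + T) * x (Sum.inr (Sum.inr c)) - x (Sum.inr (Sum.inr c))^2 := by
    intro c _
    ring
  rw [Finset.sum_congr rfl h1, Finset.sum_congr rfl h2, Finset.sum_sub_distrib,
    Finset.sum_sub_distrib, ← Finset.mul_sum, ← Finset.mul_sum, ← Finset.mul_sum, ← hS, ← hT]
  ring

lemma sum_sq_eq (x : V2 m → ℝ) :
    ∑ u, x u ^ 2 = (∑ a : Fin 2, x (Sum.inl a)^2) + (∑ b, x (Sum.inr (Sum.inl b))^2)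
      + (∑ c : Fin 2, x (Sum.inr (Sum.inr c))^2) := by
  rw [Fintype.sum_sum_type, Fintype.sum_sum_type]
  ring


set_option maxHeartbeats 1000000 in
lemma spec_eq (m : ℕ) (hm : 1 ≤ m) (lam : ℝ)
    (hquad : 2*lam^2 - ((m:ℝ)+1)*lam - 3*(m:ℝ) - 1 = 0)
    (ha : 0 < 2*lam - (m:ℝ) + 1) (hc : 0 < lam - 1) :
    sSup (spectrum ℝ (M m)) = lam := by
  have hm' : (1:ℝ) ≤ (m:ℝ) := by exact_mod_cast hm
  have hmpos : (0:ℝ) < (m:ℝ) := by linarith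
  -- eigenvector
  set x₀ : V2 m → ℝ := Sum.elim (fun _ => 0) (Sum.elim (fun _ => lam - 1) (fun _ => (m:ℝ)))
    with hx₀def
  have hx₀B : ∀ b : Fin m, x₀ (Sum.inr (Sum.inl b)) = lam - 1 := fun b => rfl
  have hx₀C : ∀ c : Fin 2, x₀ (Sum.inr (Sum.inr c)) = (m:ℝ) := fun c => rfl
  have hx0 : x₀ ≠ 0 := by
    intro h
    have : x₀ (Sum.inr (Sum.inr 0)) = 0 := by rw [h]; rfl
    rw [hx₀C] at this
    linarith
  have heig : (M m).mulVec x₀ = lam • x₀ := by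
    funext u
    cases u with
    | inl a => simp [rowA, hx₀def]
    | inr x =>
      cases x with
      | inl b =>
        rw [rowB]
        simp only [hx₀B, hx₀C, Pi.smul_apply, smul_eq_mul, Finset.sum_const, Finset.card_univ,
          Fintype.card_fin, nsmul_eq_mul]
        push_cast
        linear_combination (-(1:ℝ)/2) * hquad
      | inr c =>
        rw [rowC]
        simp only [hx₀B, hx₀C, Pi.smul_apply, smul_eq_mul, Finset.sum_const, Finset.card_univ,
          Fintype.card_fin, nsmul_eq_mul]
        push_cast
        ring
  -- membership
  have hmem : lam ∈ spectrum ℝ (M m) := by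
    rw [spectrum.mem_iff]
    intro hunit
    have hker : (algebraMap ℝ (Matrix (V2 m) (V2 m) ℝ) lam - M m).mulVec x₀ = 0 := by
      rw [Matrix.sub_mulVec, Algebra.algebraMap_eq_smul_one, Matrix.smul_mulVec,
        Matrix.one_mulVec, heig]
      simp
    have hdet : (algebraMap ℝ (Matrix (V2 m) (V2 m) ℝ) lam - M m).det = 0 :=
      (Matrix.exists_mulVec_eq_zero_iff).mp ⟨x₀, hx0, hker⟩
    rw [Matrix.isUnit_iff_isUnit_det, hdet] at hunit
    exact not_isUnit_zero hunit
  -- upper bound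
  have hub : ∀ μ ∈ spectrum ℝ (M m), μ ≤ lam := by
    intro μ hμ
    rw [spectrum.mem_iff] at hμ
    have hdet : (algebraMap ℝ (Matrix (V2 m) (V2 m) ℝ) μ - M m).det = 0 := by
      by_contra hd
      exact hμ ((Matrix.isUnit_iff_isUnit_det _).mpr (Ne.isUnit hd))
    obtain ⟨y, hy0, hky⟩ := (Matrix.exists_mulVec_eq_zero_iff).mpr hdet
    have heigy : (M m).mulVec y = μ • y := by
      rw [Matrix.sub_mulVec, Algebra.algebraMap_eq_smul_one, Matrix.smul_mulVec,
        Matrix.one_mulVec, sub_eq_zero] at hky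
      exact hky.symm
    set s := ∑ b, y (Sum.inr (Sum.inl b)) with hs
    set t := ∑ c : Fin 2, y (Sum.inr (Sum.inr c)) with ht
    set qA := ∑ a : Fin 2, y (Sum.inl a)^2 with hqAdef
    set qB := ∑ b, y (Sum.inr (Sum.inl b))^2 with hqBdef
    set qC := ∑ c : Fin 2, y (Sum.inr (Sum.inr c))^2 with hqCdef
    have hform : μ * (∑ u, y u ^ 2) = (s^2 - qB)/2 + 2*s*t + (t^2 - qC) := by
      rw [← qform (m := m) y]
      rw [heigy]
      rw [Finset.mul_sum]
      refine Finset.sum_congr rfl fun u _ => ?_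
      simp [Pi.smul_apply, smul_eq_mul]
      ring
    have htot : (∑ u, y u ^ 2) = qA + qB + qC := sum_sq_eq y
    have hCS1 : s^2 ≤ (m:ℝ) * qB := by
      have h := sq_sum_le_card_mul_sum_sq (s := (Finset.univ : Finset (Fin m)))
        (f := fun b => y (Sum.inr (Sum.inl b)))
      simp only [Finset.card_univ, Fintype.card_fin] at h
      rw [hs, hqBdef]
      exact_mod_cast h
    have hCS2 : t^2 ≤ 2 * qC := by
      have h := sq_sum_le_card_mul_sum_sq (s := (Finset.univ : Finset (Fin 2)))
        (f := fun c => y (Sum.inr (Sum.inr c)))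
      simp only [Finset.card_univ, Fintype.card_fin] at h
      rw [ht, hqCdef]
      exact_mod_cast h
    have hqA : 0 ≤ qA := Finset.sum_nonneg fun _ _ => sq_nonneg _
    have hqB : 0 ≤ qB := Finset.sum_nonneg fun _ _ => sq_nonneg _
    have hqC : 0 ≤ qC := Finset.sum_nonneg fun _ _ => sq_nonneg _
    have hsum_pos : 0 < ∑ u, y u ^ 2 := by
      obtain ⟨u, hu⟩ := Function.ne_iff.mp hy0
      exact Finset.sum_pos' (fun v _ => sq_nonneg _)
        ⟨u, Finset.mem_univ u, lt_of_le_of_ne (sq_nonneg _) (Ne.symm (pow_ne_zero 2 hu))⟩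
    have hac : (2*lam - (m:ℝ) + 1) * (lam - 1) = 4 * (m:ℝ) := by
      linear_combination hquad
    have h4 : (2*lam - (m:ℝ) + 1) * ((m:ℝ)*(lam-1)*t^2) = 4*(m:ℝ)^2*t^2 := by
      linear_combination ((m:ℝ)*t^2) * hac
    have key : 4 * (m:ℝ) * s * t ≤ (2*lam - (m:ℝ) + 1) * s^2 + (m:ℝ) * (lam - 1) * t^2 := by
      nlinarith [sq_nonneg ((2*lam - (m:ℝ) + 1) * s - 2 * (m:ℝ) * t), ha, hmpos, h4]
    have hlampos : 0 < lam := by linarith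
    have hbound : μ * (∑ u, y u ^ 2) ≤ lam * (∑ u, y u ^ 2) := by
      rw [hform, htot]
      have h1 := mul_le_mul_of_nonneg_left hCS1 ha.le
      have h2 := mul_le_mul_of_nonneg_left hCS2 (mul_pos hmpos hc).le
      have h3 := mul_le_mul_of_nonneg_left hCS1 hmpos.le
      have h4 := mul_le_mul_of_nonneg_left hCS2 (by linarith : (0:ℝ) ≤ 2*(m:ℝ))
      have h5 : 0 ≤ 2*(m:ℝ)*lam*qA :=
        mul_nonneg (mul_nonneg (by linarith : (0:ℝ) ≤ 2*(m:ℝ)) hlampos.le) hqA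
      have scaled : 2*(m:ℝ)*((s^2 - qB)/2 + 2*s*t + (t^2 - qC))
          ≤ 2*(m:ℝ)*(lam*(qA+qB+qC)) := by linarith [h1, h2, h3, h4, h5, key]
      have := (mul_le_mul_iff_right₀ (show (0:ℝ) < 2*(m:ℝ) by positivity)).mp scaled
      linarith [this]
    exact le_of_mul_le_mul_right hbound hsum_pos
  exact le_antisymm (csSup_le ⟨lam, hmem⟩ hub) (le_csSup ⟨lam, hub⟩ hmem)

lemma harary_eq' (m : ℕ) :
    hararyMatrix ((graphJoin (⊤ : SimpleGraph (Fin 2))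
      ((⊤ : SimpleGraph (Fin m)) ⊕g (⊥ : SimpleGraph (Fin 2))))ᶜ) = M m := harary_eq

end HararyAux1

/-- For `n ≥ 5`, the Harary spectral radius of the complement of
`K₂∨(K_{n−4}+2K₁)` equals `(n − 3 + √(n² + 18n − 79))/4`, which is strictly greater than
`(5n² − 23n + 28)/(n(n − 1))`. -/
theorem hararySpectralRadius_compl_NP1 (n : ℕ) (h5 : 5 ≤ n) :
    hararySpectralRadius ((graphJoin (⊤ : SimpleGraph (Fin 2))
        ((⊤ : SimpleGraph (Fin (n - 4))) ⊕g (⊥ : SimpleGraph (Fin 2))))ᶜ) =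
      ((n : ℝ) - 3 + Real.sqrt ((n : ℝ) ^ 2 + 18 * n - 79)) / 4 ∧
    ((n : ℝ) - 3 + Real.sqrt ((n : ℝ) ^ 2 + 18 * n - 79)) / 4 >
      (5 * (n : ℝ) ^ 2 - 23 * n + 28) / ((n : ℝ) * ((n : ℝ) - 1)) := by

  classical
  set r : ℝ := (n : ℝ) with hr
  have hr5 : (5:ℝ) ≤ r := by rw [hr]; exact_mod_cast h5
  have hQ : 0 ≤ r^2 + 18*r - 79 := by nlinarith
  set sq : ℝ := Real.sqrt (r^2 + 18*r - 79) with hsqdef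
  have hsq : sq^2 = r^2 + 18*r - 79 := Real.sq_sqrt hQ
  have hsq0 : 0 ≤ sq := Real.sqrt_nonneg _
  have hsn : r ≤ sq := by
    rw [hsqdef, Real.le_sqrt (by linarith) hQ]
    nlinarith
  have hcast : ((n - 4 : ℕ) : ℝ) = r - 4 := by
    rw [hr, Nat.cast_sub (by omega : 4 ≤ n)]
    norm_num
  constructor
  · show sSup (spectrum ℝ (hararyMatrix _)) = _
    rw [HararyAux1.harary_eq']
    apply HararyAux1.spec_eq (n-4) (by omega) ((r - 3 + sq)/4)
    · rw [hcast]
      linear_combination (1/8 : ℝ) * hsq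
    · rw [hcast]
      nlinarith [hsn, hr5, hsq0]
    · nlinarith [hsn, hr5, hsq0]
  · have hden : (0:ℝ) < r*(r-1) := by nlinarith
    have hu : (0:ℝ) ≤ r - 5 := by linarith
    have hQ2 : (-r^3+24*r^2-95*r+112)^2 < (r^2+18*r-79)*(r*(r-1))^2 := by
      nlinarith [hu, pow_nonneg hu 2, pow_nonneg hu 3, pow_nonneg hu 4, pow_nonneg hu 5]
    have hkey : (-r^3+24*r^2-95*r+112) < sq * (r*(r-1)) := by
      rcases lt_or_ge (-r^3+24*r^2-95*r+112) 0 with hP | hP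
      · exact hP.trans_le (by positivity)
      · by_contra hcon
        push_neg at hcon
        have h1 : (sq*(r*(r-1)))^2 ≤ (-r^3+24*r^2-95*r+112)^2 :=
          pow_le_pow_left₀ (by positivity) hcon 2
        have e : (sq*(r*(r-1)))^2 = (r^2+18*r-79)*(r*(r-1))^2 := by rw [mul_pow, hsq]
        linarith [hQ2]
    rw [gt_iff_lt, div_lt_iff₀ hden]
    nlinarith [hkey]
end
end

section
/- Let G be a connected bipartite simple graph on n ≥ 5 vertices. Then the distance spectral radius of G satisfies ρ(G) ≥ (3n − 4)/2, and in particular ρ(G) > n + 3 − 14/n. -/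
open Finset SimpleGraph

noncomputable section

open Matrix in
lemma rayleigh_le_sSup_spectrum {V : Type*} [Fintype V] [DecidableEq V] [Nonempty V]
    (A : Matrix V V ℝ) (hA : A.IsHermitian) (x : V → ℝ) :
    x ⬝ᵥ (A *ᵥ x) ≤ sSup (spectrum ℝ A) * (x ⬝ᵥ x) := by
  classical
  have hbdd : BddAbove (spectrum ℝ A) := (Matrix.finite_real_spectrum (A := A)).bddAbove
  have hle : ∀ i, hA.eigenvalues i ≤ sSup (spectrum ℝ A) := fun i =>
    le_csSup hbdd (hA.eigenvalues_mem_spectrum_real i)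
  set b := hA.eigenvectorBasis with hb
  set y : EuclideanSpace ℝ V := (WithLp.equiv 2 (V → ℝ)).symm x with hy
  have hTy : Matrix.toEuclideanLin A y = ∑ j, (hA.eigenvalues j * b.repr y j) • b j := by
    conv_lhs => rw [← b.sum_repr y]
    rw [map_sum]
    refine Finset.sum_congr rfl fun j _ => ?_
    rw [_root_.map_smul]
    have h1 : Matrix.toEuclideanLin A (b j) = hA.eigenvalues j • b j := by
      apply (WithLp.equiv 2 (V → ℝ)).injective
      simp [Matrix.toLin'_apply, hA.mulVec_eigenvectorBasis]
      exact hA.mulVec_eigenvectorBasis j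
    rw [h1, smul_smul, mul_comm]
  have hkey : x ⬝ᵥ (A *ᵥ x) = ∑ j, hA.eigenvalues j * (b.repr y j) ^ 2 := by
    have h1 : x ⬝ᵥ (A *ᵥ x) = (inner ℝ y (Matrix.toEuclideanLin A y) : ℝ) := by
      rw [EuclideanSpace.inner_eq_star_dotProduct, dotProduct_comm]; rfl
    rw [h1, hTy, inner_sum]
    refine Finset.sum_congr rfl fun j _ => ?_
    rw [real_inner_smul_right, real_inner_comm, ← OrthonormalBasis.repr_apply_apply]
    ring
  have hkey2 : x ⬝ᵥ x = ∑ j, (b.repr y j) ^ 2 := by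
    have h1 : x ⬝ᵥ x = (inner ℝ y y : ℝ) := rfl
    rw [h1, ← b.repr.inner_map_map y y, EuclideanSpace.inner_eq_star_dotProduct]
    simp [dotProduct, sq]
  rw [hkey, hkey2, Finset.mul_sum]
  exact Finset.sum_le_sum fun j _ =>
    mul_le_mul_of_nonneg_right (hle j) (sq_nonneg _)


open Matrix in
/-- For a connected bipartite graph on `n ≥ 5` vertices,
`ρ(G) ≥ (3n − 4)/2`, and in particular `ρ(G) > n + 3 − 14/n`. -/
theorem distSpectralRadius_of_bipartite {V : Type*} [Fintype V] [DecidableEq V]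
    (G : SimpleGraph V) (n : ℕ) (hn : Fintype.card V = n) (h5 : 5 ≤ n)
    (hconn : G.Connected) (hbip : _root_.IsBipartite G) :
    distSpectralRadius G ≥ (3 * (n : ℝ) - 4) / 2 ∧
      distSpectralRadius G > (n : ℝ) + 3 - 14 / n := by
  classical
  have hnpos : 0 < n := by omega
  have hVne : Nonempty V := by
    rw [← Fintype.card_pos_iff, hn]; omega
  obtain ⟨c⟩ := hbip
  set D := distMatrix G with hDdef
  have hD : D.IsHermitian := by
    show D.conjTranspose = D
    ext i j
    simp [hDdef, distMatrix, Matrix.conjTranspose_apply, SimpleGraph.dist_comm]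
  set ρ := distSpectralRadius G with hρdef
  -- the Rayleigh bound with the all-ones vector
  set x : V → ℝ := fun _ => 1 with hx
  have hray := rayleigh_le_sSup_spectrum D hD x
  have hxx : x ⬝ᵥ x = (n : ℝ) := by
    simp [dotProduct, hx, ← hn]
  have hS : x ⬝ᵥ (D *ᵥ x) = ∑ u : V, ∑ v : V, (G.dist u v : ℝ) := by
    simp [dotProduct, Matrix.mulVec, hDdef, distMatrix, hx]
  -- counting: fibers of the 2-coloring
  set a : ℕ := (univ.filter fun v : V => c v = 0).card with ha
  set b : ℕ := (univ.filter fun v : V => c v = 1).card with hbdef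
  have hfin2 : ∀ z : Fin 2, z = 0 ∨ z = 1 := by decide
  have hab : a + b = n := by
    have hsplit := Finset.card_filter_add_card_filter_not
      (s := (univ : Finset V)) (p := fun v : V => c v = 0)
    have hnegeq : (univ.filter fun v : V => ¬ c v = 0)
        = (univ.filter fun v : V => c v = 1) := by
      apply Finset.filter_congr
      intro v _
      rcases hfin2 (c v) with h | h <;> simp [h]
    rw [hnegeq] at hsplit
    rw [ha, hbdef, ← hn, ← Finset.card_univ, hsplit]
  -- the cross-color count E
  set E : ℝ := ∑ u : V, ∑ v : V, (if c u ≠ c v then (1 : ℝ) else 0) with hE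
  have hinnerE : ∀ u : V, (∑ v : V, (if c u ≠ c v then (1 : ℝ) else 0))
      = (if c u = 0 then (b : ℝ) else (a : ℝ)) := by
    intro u
    rcases hfin2 (c u) with h | h
    · rw [if_pos h]
      have : ∀ v : V, (c u ≠ c v) = (c v = 1) := by
        intro v; rcases hfin2 (c v) with h2 | h2 <;> simp [h, h2]
      simp only [this]
      rw [Finset.sum_boole, hbdef]
    · have h0 : ¬ (c u = 0) := by rw [h]; decide
      rw [if_neg h0]
      have : ∀ v : V, (c u ≠ c v) = (c v = 0) := by
        intro v; rcases hfin2 (c v) with h2 | h2 <;> simp [h, h2]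
      simp only [this]
      rw [Finset.sum_boole, ha]
  have hcardb : (univ.filter fun u : V => ¬ c u = 0).card = b := by
    rw [hbdef]
    congr 1
    apply Finset.filter_congr
    intro v _
    rcases hfin2 (c v) with h | h <;> simp [h]
  have hEval : E = (a : ℝ) * b + (b : ℝ) * a := by
    have h0 : (∑ u ∈ univ.filter (fun u : V => c u = 0),
        ∑ v : V, if c u ≠ c v then (1:ℝ) else 0) = (a:ℝ) * b := by
      calc (∑ u ∈ univ.filter (fun u : V => c u = 0),
            ∑ v : V, if c u ≠ c v then (1:ℝ) else 0)
          = ∑ _u ∈ univ.filter (fun u : V => c u = 0), (b:ℝ) :=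
            Finset.sum_congr rfl fun u hu => by
              rw [hinnerE u, if_pos (Finset.mem_filter.mp hu).2]
        _ = (a:ℝ) * b := by rw [Finset.sum_const, ← ha]; simp [nsmul_eq_mul]
    have h1 : (∑ u ∈ univ.filter (fun u : V => ¬ c u = 0),
        ∑ v : V, if c u ≠ c v then (1:ℝ) else 0) = (b:ℝ) * a := by
      calc (∑ u ∈ univ.filter (fun u : V => ¬ c u = 0),
            ∑ v : V, if c u ≠ c v then (1:ℝ) else 0)
          = ∑ _u ∈ univ.filter (fun u : V => ¬ c u = 0), (a:ℝ) :=
            Finset.sum_congr rfl fun u hu => by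
              rw [hinnerE u, if_neg (Finset.mem_filter.mp hu).2]
        _ = (b:ℝ) * a := by rw [Finset.sum_const, hcardb]; simp [nsmul_eq_mul]
    rw [hE, ← Finset.sum_filter_add_sum_filter_not univ (fun u : V => c u = 0), h0, h1]
  -- pointwise lower bound on distances
  have hpair : ∀ u v : V, (2 : ℝ) - (if c u ≠ c v then (1:ℝ) else 0)
      - (if u = v then (2:ℝ) else 0) ≤ (G.dist u v : ℝ) := by
    intro u v
    by_cases huv : u = v
    · subst huv
      simp [SimpleGraph.dist_self]
    · have hpos : 0 < G.dist u v := hconn.pos_dist_of_ne huv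
      by_cases hcc : c u = c v
      · have hna : ¬ G.Adj u v := fun hadj => (c.valid hadj) hcc
        have h1 : G.dist u v ≠ 1 := fun h => hna (SimpleGraph.dist_eq_one_iff_adj.mp h)
        have h2 : 2 ≤ G.dist u v := by omega
        have : (2 : ℝ) ≤ (G.dist u v : ℝ) := by exact_mod_cast h2
        simp [huv, hcc]
        linarith
      · have : (1 : ℝ) ≤ (G.dist u v : ℝ) := by exact_mod_cast hpos
        simp [huv, hcc]
        linarith
  -- sum the lower bound
  have hSlow : 2 * (n:ℝ)^2 - E - 2 * n ≤ ∑ u : V, ∑ v : V, (G.dist u v : ℝ) := by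
    have h1 : ∀ u : V, ∑ v : V, ((2 : ℝ) - (if c u ≠ c v then (1:ℝ) else 0)
        - (if u = v then (2:ℝ) else 0))
        = 2 * (n:ℝ) - (∑ v : V, (if c u ≠ c v then (1:ℝ) else 0)) - 2 := by
      intro u
      rw [Finset.sum_sub_distrib, Finset.sum_sub_distrib]
      congr 1
      · congr 1
        simp [Finset.card_univ, hn, mul_comm]
      · rw [Finset.sum_ite_eq univ u (fun _ => (2:ℝ))]
        simp
    calc 2 * (n:ℝ)^2 - E - 2 * n
        = ∑ u : V, (2 * (n:ℝ) - (∑ v : V, (if c u ≠ c v then (1:ℝ) else 0)) - 2) := by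
          rw [Finset.sum_sub_distrib, Finset.sum_sub_distrib, hE]
          simp [Finset.card_univ, hn]
          ring
      _ = ∑ u : V, ∑ v : V, ((2 : ℝ) - (if c u ≠ c v then (1:ℝ) else 0)
            - (if u = v then (2:ℝ) else 0)) := by
          exact (Finset.sum_congr rfl fun u _ => (h1 u)).symm
      _ ≤ ∑ u : V, ∑ v : V, (G.dist u v : ℝ) :=
          Finset.sum_le_sum fun u _ => Finset.sum_le_sum fun v _ => hpair u v
  -- E ≤ n²/2
  have hEle : E ≤ (n:ℝ)^2 / 2 := by
    have habR : (a : ℝ) + b = n := by exact_mod_cast hab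
    rw [hEval]
    nlinarith [sq_nonneg ((a:ℝ) - b)]
  -- assemble
  have hmain : (3 * (n:ℝ) - 4) / 2 ≤ ρ := by
    have hnR : (0:ℝ) < n := by exact_mod_cast hnpos
    have h1 : 2 * (n:ℝ)^2 - (n:ℝ)^2/2 - 2 * n ≤ ρ * n := by
      have := hray
      rw [hxx, hS] at this
      have h2 : 2 * (n:ℝ)^2 - E - 2 * n ≤ ρ * n := le_trans hSlow this
      linarith
    rw [div_le_iff₀ (by norm_num : (0:ℝ) < 2)]
    rw [← mul_le_mul_iff_of_pos_right hnR]
    nlinarith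
  constructor
  · exact hmain
  · have hnR : (0:ℝ) < n := by exact_mod_cast hnpos
    have h5R : (5:ℝ) ≤ n := by exact_mod_cast h5
    have h14 : 14 / (n:ℝ) * n = 14 := div_mul_cancel₀ _ (ne_of_gt hnR)
    have : (n:ℝ) + 3 - 14 / n < (3 * (n:ℝ) - 4) / 2 := by
      rw [← mul_lt_mul_iff_of_pos_right hnR]
      have hd : ((n:ℝ) + 3 - 14 / n) * n = (n:ℝ)^2 + 3*n - 14 := by
        field_simp
      rw [hd]
      nlinarith [sq_nonneg ((n:ℝ) - 5)]
    exact lt_of_lt_of_le this hmain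
end
end
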